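/- Let o₁ and o₂ be two uncertain 2D objects that are closed disks B̄(c₁,r) and B̄(c₂,r) of equal radius r > 0 with distinct centers c₁ ≠ c₂. Then for every point x in the plane with dist(x,c₁) = dist(x,c₂) one has p(x) = 1/2, and for every point x with dist(x,c₁) < dist(x,c₂) one has p(x) > 1/2 (and symmetrically p(x) < 1/2 when dist(x,c₁) > dist(x,c₂)). In other words, the probabilistic bisector of two equi-range circular objects is the perpendicular bisector of their centers. -/

import Mathlib

open MeasureTheory Metric
open scoped ENNReal

lemma auxR {a b A B : ℝ} (ha : 0 ≤ a) (hab : a ≤ b) :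
    min A (b+B) - max (-A) (b-B) ≤ min A (a+B) - max (-A) (a-B) := by
  rcases le_total A (a+B) with h1 | h1 <;> rcases le_total A (b+B) with h2 | h2 <;>
    rcases le_total (-A) (a-B) with h3 | h3 <;> rcases le_total (-A) (b-B) with h4 | h4 <;>
    simp [min_def, max_def, *] <;> linarith

lemma auxSlice {t r y : ℝ} {a b : ℝ} (ha : 0 ≤ a) (hab : a ≤ b) :
    volume {s : ℝ | s^2 + y^2 < t^2 ∧ (s-b)^2 + y^2 ≤ r^2}
      ≤ volume {s : ℝ | s^2 + y^2 < t^2 ∧ (s-a)^2 + y^2 ≤ r^2} := by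
  set A := Real.sqrt (t^2 - y^2) with hA
  set B := Real.sqrt (r^2 - y^2) with hB
  have hupper : {s : ℝ | s^2 + y^2 < t^2 ∧ (s-b)^2 + y^2 ≤ r^2}
      ⊆ Set.Icc (max (-A) (b-B)) (min A (b+B)) := by
    rintro s ⟨h1, h2⟩
    have habs1 : |s| < A := by
      rw [hA, ← Real.sqrt_sq_eq_abs s]
      exact Real.sqrt_lt_sqrt (sq_nonneg _) (by linarith)
    have habs2 : |s - b| ≤ B := by
      rw [hB, ← Real.sqrt_sq_eq_abs (s-b)]
      exact Real.sqrt_le_sqrt (by linarith)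
    rw [abs_lt] at habs1; rw [abs_le] at habs2
    exact ⟨max_le habs1.1.le (by linarith [habs2.1]), le_min habs1.2.le (by linarith [habs2.2])⟩
  have hlower : Set.Ioo (max (-A) (a-B)) (min A (a+B))
      ⊆ {s : ℝ | s^2 + y^2 < t^2 ∧ (s-a)^2 + y^2 ≤ r^2} := by
    rintro s ⟨hl, hu⟩
    have h1 : -A < s := lt_of_le_of_lt (le_max_left _ _) hl
    have h2 : s < A := lt_of_lt_of_le hu (min_le_left _ _)
    have h3 : a - B < s := lt_of_le_of_lt (le_max_right _ _) hl
    have h4 : s < a + B := lt_of_lt_of_le hu (min_le_right _ _)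
    have hApos : 0 < A := by
      rcases le_or_gt A 0 with h | h
      · linarith
      · exact h
    have hBpos : 0 < B := by linarith
    have htpos : 0 < t^2 - y^2 := by rwa [hA, Real.sqrt_pos] at hApos
    have hrpos : 0 < r^2 - y^2 := by rwa [hB, Real.sqrt_pos] at hBpos
    have hA2 : A^2 = t^2 - y^2 := Real.sq_sqrt htpos.le
    have hB2 : B^2 = r^2 - y^2 := Real.sq_sqrt hrpos.le
    constructor
    · have : s^2 < A^2 := by nlinarith [mul_pos (by linarith : (0:ℝ) < A - s) (by linarith : (0:ℝ) < A + s)]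
      linarith
    · have : (s-a)^2 ≤ B^2 := by nlinarith [mul_pos (by linarith : (0:ℝ) < B - (s-a)) (by linarith : (0:ℝ) < B + (s-a))]
      linarith
  calc volume {s : ℝ | s^2 + y^2 < t^2 ∧ (s-b)^2 + y^2 ≤ r^2}
      ≤ volume (Set.Icc (max (-A) (b-B)) (min A (b+B))) := measure_mono hupper
    _ = ENNReal.ofReal (min A (b+B) - max (-A) (b-B)) := Real.volume_Icc
    _ ≤ ENNReal.ofReal (min A (a+B) - max (-A) (a-B)) := ENNReal.ofReal_le_ofReal (auxR ha hab)
    _ = volume (Set.Ioo (max (-A) (a-B)) (min A (a+B))) := Real.volume_Ioo.symm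
    _ ≤ volume {s : ℝ | s^2 + y^2 < t^2 ∧ (s-a)^2 + y^2 ≤ r^2} := measure_mono hlower

local notation "Eu" => EuclideanSpace ℝ (Fin 2)

noncomputable def pt (c : ℝ) : Eu := EuclideanSpace.single (0 : Fin 2) c

lemma dist_pt (y : Eu) (c : ℝ) :
    dist y (pt c) = Real.sqrt ((y 0 - c)^2 + (y 1)^2) := by
  rw [EuclideanSpace.dist_eq, Fin.sum_univ_two]
  congr 1
  · simp [pt, EuclideanSpace.single_apply, Real.dist_eq, sq_abs]
lemma dist_zero' (y : Eu) : dist y (0 : Eu) = Real.sqrt ((y 0)^2 + (y 1)^2) := by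
  have h := dist_pt y 0
  have : (pt 0 : Eu) = 0 := by
    ext i; simp [pt, EuclideanSpace.single_apply]
  rw [this] at h; simpa using h

lemma sqrt_le_iff' {Q r : ℝ} (hr : 0 ≤ r) : Real.sqrt Q ≤ r ↔ Q ≤ r^2 := by
  constructor
  · intro h
    rcases le_or_gt Q 0 with hQ | hQ
    · nlinarith
    · nlinarith [Real.sq_sqrt hQ.le, Real.sqrt_nonneg Q]
  · intro h
    calc Real.sqrt Q ≤ Real.sqrt (r^2) := Real.sqrt_le_sqrt h
      _ = r := Real.sqrt_sq hr

lemma sqrt_lt_iff' {Q t : ℝ} (ht : 0 < t) : Real.sqrt Q < t ↔ Q < t^2 :=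
  Real.sqrt_lt' ht

lemma auxM {t r a b : ℝ} (ha : 0 ≤ a) (hab : a ≤ b) :
    volume (ball (0:Eu) t ∩ closedBall (pt b) r)
      ≤ volume (ball (0:Eu) t ∩ closedBall (pt a) r) := by
  rcases le_or_gt t 0 with ht | ht
  · simp [ball_eq_empty.mpr ht]
  rcases lt_or_ge r 0 with hrneg | hr0
  · simp [closedBall_eq_empty.mpr hrneg]
  set T : ℝ → Set (ℝ × ℝ) :=
    fun c => {p : ℝ × ℝ | p.2^2 + p.1^2 < t^2 ∧ (p.2 - c)^2 + p.1^2 ≤ r^2} with hT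
  have hTm : ∀ c, MeasurableSet (T c) := by
    intro c
    have hc1 : Continuous fun p : ℝ × ℝ => p.2^2 + p.1^2 := by fun_prop
    have hc2 : Continuous fun p : ℝ × ℝ => (p.2 - c)^2 + p.1^2 := by fun_prop
    exact (isOpen_lt hc1 continuous_const).measurableSet.inter
      (isClosed_le hc2 continuous_const).measurableSet
  have hΨ : MeasurePreserving
      (fun y : Eu => Prod.swap (MeasurableEquiv.finTwoArrow
        ((MeasurableEquiv.toLp 2 (Fin 2 → ℝ)).symm y))) volume volume := by
    have h3 : MeasurePreserving (Prod.swap : ℝ × ℝ → ℝ × ℝ) volume volume := by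
      rw [Measure.volume_eq_prod]
      exact Measure.measurePreserving_swap
    exact h3.comp ((volume_preserving_finTwoArrow ℝ).comp
      (EuclideanSpace.volume_preserving_symm_measurableEquiv_toLp (Fin 2)))
  have hpre : ∀ c : ℝ, (fun y : Eu => Prod.swap (MeasurableEquiv.finTwoArrow
        ((MeasurableEquiv.toLp 2 (Fin 2 → ℝ)).symm y))) ⁻¹' (T c)
      = ball (0:Eu) t ∩ closedBall (pt c) r := by
    intro c
    ext y
    simp only [Set.mem_preimage, hT, Set.mem_setOf_eq, MeasurableEquiv.finTwoArrow,
      Set.mem_inter_iff, mem_ball, mem_closedBall, Prod.swap]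
    rw [dist_zero', dist_pt, sqrt_lt_iff' ht, sqrt_le_iff' hr0]
    simp [MeasurableEquiv.toLp]
    exact Iff.rfl
  have hvol : ∀ c : ℝ, volume (ball (0:Eu) t ∩ closedBall (pt c) r) = volume (T c) := by
    intro c
    rw [← hpre c]
    exact hΨ.measure_preimage (hTm c).nullMeasurableSet
  rw [hvol a, hvol b, Measure.volume_eq_prod, Measure.prod_apply (hTm b),
    Measure.prod_apply (hTm a)]
  refine lintegral_mono fun y => ?_
  have := auxSlice (t := t) (r := r) (y := y) ha hab
  simpa [hT, Set.preimage_setOf_eq] using this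
lemma norm_pt (d : ℝ) (hd : 0 ≤ d) : ‖(pt d : Eu)‖ = d := by
  rw [← dist_zero_right, dist_zero' (pt d)]
  simp only [pt, EuclideanSpace.single_apply]
  norm_num
  rw [Real.sqrt_sq hd]

lemma auxL (x c : Eu) (t r : ℝ) :
    volume (ball x t ∩ closedBall c r)
      = volume (ball (0:Eu) t ∩ closedBall (pt (dist x c)) r) := by
  set d := dist x c with hdd
  have hd : 0 ≤ d := dist_nonneg
  have hτ : MeasurePreserving (fun y : Eu => y + x) volume volume :=
    measurePreserving_add_right volume x
  have hτpre : (fun y : Eu => y + x) ⁻¹' (ball x t ∩ closedBall c r)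
      = ball (0:Eu) t ∩ closedBall (c - x) r := by
    ext y
    simp only [Set.mem_preimage, Set.mem_inter_iff, mem_ball, mem_closedBall, dist_eq_norm]
    have e1 : y + x - x = y - 0 := by abel
    have e2 : y + x - c = y - (c - x) := by abel
    rw [e1, e2]
  have hnorm : ‖c - x‖ = ‖(pt d : Eu)‖ := by
    rw [norm_pt d hd, hdd, dist_comm, dist_eq_norm]
  set R := (Submodule.reflection (ℝ ∙ ((c - x) - pt d))ᗮ : Eu ≃ₗᵢ[ℝ] Eu) with hRdef
  have hR : R (c - x) = pt d := Submodule.reflection_sub hnorm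
  have hRmp : MeasurePreserving R volume volume := R.measurePreserving
  have hRpre : (⇑R) ⁻¹' (ball (0:Eu) t ∩ closedBall (pt d) r)
      = ball (0:Eu) t ∩ closedBall (c - x) r := by
    ext y
    simp only [Set.mem_preimage, Set.mem_inter_iff, mem_ball, mem_closedBall]
    have k1 : dist (R y) (0:Eu) = dist y (0:Eu) := by
      conv_lhs => rw [← map_zero R]
      exact R.dist_map y 0
    have k2 : dist (R y) (pt d) = dist y (c - x) := by
      conv_lhs => rw [← hR]
      exact R.dist_map y (c - x)
    rw [k1, k2]
  have hmeas1 : MeasurableSet (ball x t ∩ closedBall c r) :=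
    isOpen_ball.measurableSet.inter isClosed_closedBall.measurableSet
  have hmeas2 : MeasurableSet (ball (0:Eu) t ∩ closedBall (pt d) r) :=
    isOpen_ball.measurableSet.inter isClosed_closedBall.measurableSet
  calc volume (ball x t ∩ closedBall c r)
      = volume ((fun y : Eu => y + x) ⁻¹' (ball x t ∩ closedBall c r)) :=
        (hτ.measure_preimage hmeas1.nullMeasurableSet).symm
    _ = volume (ball (0:Eu) t ∩ closedBall (c - x) r) := by rw [hτpre]
    _ = volume ((⇑R) ⁻¹' (ball (0:Eu) t ∩ closedBall (pt d) r)) := by rw [hRpre]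
    _ = volume (ball (0:Eu) t ∩ closedBall (pt d) r) :=
        hRmp.measure_preimage hmeas2.nullMeasurableSet

lemma auxL' (x c c' : Eu) (t r : ℝ) (h : dist x c ≤ dist x c') :
    volume (ball x t ∩ closedBall c' r) ≤ volume (ball x t ∩ closedBall c r) := by
  rw [auxL x c' t r, auxL x c t r]
  exact auxM dist_nonneg h

/-- The uniform probability measure on the closed ball of center `c` and radius `r`
in the Euclidean plane. -/
noncomputable def unifBall (c : EuclideanSpace ℝ (Fin 2)) (r : ℝ) :
    Measure (EuclideanSpace ℝ (Fin 2)) :=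
  (volume (Metric.closedBall c r))⁻¹ • volume.restrict (Metric.closedBall c r)

lemma unifBall_apply (c : Eu) (r : ℝ) (s : Set Eu) :
    unifBall c r s = (volume (closedBall c r))⁻¹ * volume (s ∩ closedBall c r) := by
  simp [unifBall, Measure.smul_apply, Measure.restrict_apply' measurableSet_closedBall,
    smul_eq_mul]

variable {r : ℝ}

lemma kappa_ne_zero (c : Eu) (hr : 0 < r) : volume (closedBall c r) ≠ 0 :=
  ((measure_ball_pos volume c hr).trans_le (measure_mono ball_subset_closedBall)).ne'

lemma kappa_ne_top (c : Eu) : volume (closedBall c r) ≠ ⊤ :=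
  (isCompact_closedBall c r).measure_lt_top.ne

lemma unifBall_isProb (c : Eu) (hr : 0 < r) : IsProbabilityMeasure (unifBall c r) := by
  constructor
  rw [unifBall_apply, Set.univ_inter, ENNReal.inv_mul_cancel (kappa_ne_zero c hr) (kappa_ne_top c)]

/-- The "nearer to x" event. -/
def Aev (x : Eu) : Set (Eu × Eu) := {uv : Eu × Eu | dist uv.1 x < dist uv.2 x}

lemma Aev_measurable (x : Eu) : MeasurableSet (Aev x) :=
  (isOpen_lt (continuous_fst.dist continuous_const)
    (continuous_snd.dist continuous_const)).measurableSet

lemma Aev_swap (x : Eu) : Prod.swap ⁻¹' (Aev x) = {uv : Eu × Eu | dist uv.2 x < dist uv.1 x} := by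
  ext uv; simp [Aev, Prod.swap]

lemma prod_A_eq (c c' : Eu) (x : Eu) (hr : 0 < r) :
    ((unifBall c r).prod (unifBall c' r)) (Aev x)
      = ∫⁻ v, unifBall c r (ball x (dist v x)) ∂(unifBall c' r) := by
  haveI := unifBall_isProb c hr
  haveI := unifBall_isProb c' hr
  rw [Measure.prod_apply_symm (Aev_measurable x)]
  refine lintegral_congr fun v => ?_
  have hset : (fun u : Eu => (u, v)) ⁻¹' (Aev x) = ball x (dist v x) := by
    ext u; simp [Aev, mem_ball]
  rw [hset]

lemma ties_zero (c c' : Eu) (x : Eu) (hr : 0 < r) :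
    ((unifBall c r).prod (unifBall c' r)) {uv : Eu × Eu | dist uv.1 x = dist uv.2 x} = 0 := by
  haveI := unifBall_isProb c hr
  haveI := unifBall_isProb c' hr
  have hm : MeasurableSet {uv : Eu × Eu | dist uv.1 x = dist uv.2 x} :=
    (isClosed_eq (continuous_fst.dist continuous_const)
      (continuous_snd.dist continuous_const)).measurableSet
  rw [Measure.prod_apply hm]
  have h00 : ∀ u : Eu, unifBall c' r {v : Eu | dist u x = dist v x} = 0 := by
    intro u
    have hsub : {v : Eu | dist u x = dist v x} ⊆ sphere x (dist u x) := by
      intro v hv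
      simp only [Set.mem_setOf_eq] at hv
      exact mem_sphere.mpr hv.symm
    have h0 : volume (sphere x (dist u x)) = 0 := Measure.addHaar_sphere volume x _
    rw [unifBall_apply]
    have h1 : volume ({v : Eu | dist u x = dist v x} ∩ closedBall c' r) = 0 :=
      measure_mono_null (Set.inter_subset_left.trans hsub) h0
    rw [h1, mul_zero]
  have : ∀ u : Eu, unifBall c' r
      (Prod.mk u ⁻¹' {uv : Eu × Eu | dist uv.1 x = dist uv.2 x}) = 0 := by
    intro u
    rw [show (Prod.mk u ⁻¹' {uv : Eu × Eu | dist uv.1 x = dist uv.2 x})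
      = {v : Eu | dist u x = dist v x} from rfl]
    exact h00 u
  simp only [this, lintegral_zero]

lemma partition_one (c c' : Eu) (x : Eu) (hr : 0 < r) :
    ((unifBall c r).prod (unifBall c' r)) (Aev x)
      + ((unifBall c r).prod (unifBall c' r)) {uv : Eu × Eu | dist uv.2 x < dist uv.1 x}
      = 1 := by
  haveI := unifBall_isProb c hr
  haveI := unifBall_isProb c' hr
  haveI : IsProbabilityMeasure ((unifBall c r).prod (unifBall c' r)) := by infer_instance
  set P := (unifBall c r).prod (unifBall c' r)
  have hA' : MeasurableSet {uv : Eu × Eu | dist uv.2 x < dist uv.1 x} :=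
    (isOpen_lt (continuous_snd.dist continuous_const)
      (continuous_fst.dist continuous_const)).measurableSet
  have hdisj : Disjoint (Aev x) {uv : Eu × Eu | dist uv.2 x < dist uv.1 x} := by
    rw [Set.disjoint_left]
    intro uv h1 h2
    simp only [Aev, Set.mem_setOf_eq] at h1 h2
    exact absurd h2 (not_lt.mpr h1.le)
  have hcover : Aev x ∪ {uv : Eu × Eu | dist uv.2 x < dist uv.1 x}
      ∪ {uv : Eu × Eu | dist uv.1 x = dist uv.2 x} = Set.univ := by
    ext uv
    simp only [Set.mem_union, Set.mem_setOf_eq, Set.mem_univ, iff_true, Aev]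
    rcases lt_trichotomy (dist uv.1 x) (dist uv.2 x) with h | h | h
    · exact Or.inl (Or.inl h)
    · exact Or.inr h
    · exact Or.inl (Or.inr h)
  have h1 : P (Aev x ∪ {uv : Eu × Eu | dist uv.2 x < dist uv.1 x}) = 1 := by
    apply le_antisymm prob_le_one
    calc (1:ℝ≥0∞) = P Set.univ := (measure_univ).symm
      _ = P (Aev x ∪ {uv : Eu × Eu | dist uv.2 x < dist uv.1 x}
            ∪ {uv : Eu × Eu | dist uv.1 x = dist uv.2 x}) := by rw [hcover]
      _ ≤ P (Aev x ∪ {uv : Eu × Eu | dist uv.2 x < dist uv.1 x})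
            + P {uv : Eu × Eu | dist uv.1 x = dist uv.2 x} := measure_union_le _ _
      _ = P (Aev x ∪ {uv : Eu × Eu | dist uv.2 x < dist uv.1 x}) := by
            rw [ties_zero c c' x hr, add_zero]
  rw [← measure_union hdisj hA', h1]

lemma same_center_half (c : Eu) (x : Eu) (hr : 0 < r) :
    ((unifBall c r).prod (unifBall c r)) (Aev x) = 1/2 := by
  haveI := unifBall_isProb c hr
  have hswap := (Measure.measurePreserving_swap
    (μ := unifBall c r) (ν := unifBall c r)).measure_preimage
    (Aev_measurable x).nullMeasurableSet
  rw [Aev_swap] at hswap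
  have hpart := partition_one c c x hr
  rw [hswap] at hpart
  have h2 : 2 * ((unifBall c r).prod (unifBall c r)) (Aev x) = 1 := by
    rw [two_mul]; exact hpart
  exact (ENNReal.eq_div_iff (by norm_num) (by norm_num)).mpr h2

lemma G_mono (c c' : Eu) (x v : Eu) (h : dist x c ≤ dist x c') :
    unifBall c' r (ball x (dist v x)) ≤ unifBall c r (ball x (dist v x)) := by
  rw [unifBall_apply, unifBall_apply,
    Measure.addHaar_closedBall_center volume c, Measure.addHaar_closedBall_center volume c']
  exact mul_le_mul_right (auxL' x c c' (dist v x) r h) _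

lemma half_le_P (c c' : Eu) (x : Eu) (hr : 0 < r) (h : dist x c ≤ dist x c') :
    1/2 ≤ ((unifBall c r).prod (unifBall c' r)) (Aev x) := by
  rw [prod_A_eq c c' x hr, ← same_center_half c' x hr, prod_A_eq c' c' x hr]
  exact lintegral_mono fun v => G_mono c c' x v h

lemma P_eq_half (c c' : Eu) (x : Eu) (hr : 0 < r) (h : dist x c = dist x c') :
    ((unifBall c r).prod (unifBall c' r)) (Aev x) = 1/2 := by
  rw [prod_A_eq c c' x hr, ← same_center_half c' x hr, prod_A_eq c' c' x hr]
  congr 1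
  ext v
  exact le_antisymm (G_mono c' c x v h.ge) (G_mono c c' x v h.le)

lemma aux_far {x c' : Eu} (hb : 0 < dist x c') {r τ : ℝ} (hr : 0 < r)
    (hτ : τ < dist x c' + r) : ∃ w : Eu, dist w c' < r ∧ τ < dist w x := by
  set b := dist x c' with hbdef
  set m := max 0 (τ - b) with hm
  have hm0 : 0 ≤ m := le_max_left _ _
  have hmr : m < r := max_lt hr (by linarith)
  set ρ := (m + r)/2 with hρ
  have hρ0 : 0 < ρ := by simp only [hρ]; linarith
  have hρr : ρ < r := by simp only [hρ]; linarith
  have hρτ : τ - b < ρ := by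
    have h1 : τ - b ≤ m := le_max_right _ _
    simp only [hρ]; linarith
  have hbne : b ≠ 0 := hb.ne'
  refine ⟨c' + (ρ/b) • (c' - x), ?_, ?_⟩
  · have : dist (c' + (ρ/b) • (c' - x)) c' = ρ := by
      rw [dist_eq_norm]
      have he : c' + (ρ/b) • (c' - x) - c' = (ρ/b) • (c' - x) := by abel
      rw [he, norm_smul]
      have : ‖c' - x‖ = b := by rw [← dist_eq_norm, dist_comm, hbdef]
      rw [this, Real.norm_eq_abs, abs_of_nonneg (by positivity)]
      field_simp
    rw [this]; exact hρr
  · have : dist (c' + (ρ/b) • (c' - x)) x = b + ρ := by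
      rw [dist_eq_norm]
      have he : c' + (ρ/b) • (c' - x) - x = (1 + ρ/b) • (c' - x) := by
        rw [add_smul, one_smul]; abel
      rw [he, norm_smul]
      have hn : ‖c' - x‖ = b := by rw [← dist_eq_norm, dist_comm, hbdef]
      rw [hn, Real.norm_eq_abs, abs_of_nonneg (by positivity)]
      field_simp
    rw [this]; linarith

lemma P_gt_half (c c' : Eu) (x : Eu) (hr : 0 < r) (h : dist x c < dist x c') :
    1/2 < ((unifBall c r).prod (unifBall c' r)) (Aev x) := by
  haveI := unifBall_isProb c hr
  haveI := unifBall_isProb c' hr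
  have hb : 0 < dist x c' := lt_of_le_of_lt dist_nonneg h
  rw [prod_A_eq c c' x hr, ← same_center_half c' x hr, prod_A_eq c' c' x hr]
  set s : Set Eu := {v : Eu | dist v c' < r ∧ dist x c + r < dist v x} with hs
  have hsopen : IsOpen s := by
    apply IsOpen.inter
    · exact isOpen_lt (continuous_id.dist continuous_const) continuous_const
    · exact isOpen_lt continuous_const (continuous_id.dist continuous_const)
  obtain ⟨w, hw1, hw2⟩ := aux_far hb hr (τ := dist x c + r) (by linarith)
  refine lintegral_strict_mono_of_ae_le_of_ae_lt_on (s := s) ?_ ?_ ?_ ?_ ?_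
  · -- AEMeasurable of the larger function
    have hmono : Monotone (fun t : ℝ => unifBall c r (ball x t)) :=
      fun t t' htt => measure_mono (ball_subset_ball htt)
    exact (hmono.measurable.comp
      (continuous_id.dist continuous_const).measurable).aemeasurable
  · rw [← prod_A_eq c' c' x hr, same_center_half c' x hr]
    norm_num
  · exact Filter.Eventually.of_forall fun v => G_mono c c' x v h.le
  · -- positive measure of s
    rw [unifBall_apply]
    have hsub : s ⊆ closedBall c' r := fun v hv => ball_subset_closedBall hv.1
    rw [Set.inter_eq_left.mpr hsub]
    exact mul_ne_zero (ENNReal.inv_ne_zero.mpr (kappa_ne_top c'))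
      (hsopen.measure_pos volume ⟨w, hw1, hw2⟩).ne'
  · refine Filter.Eventually.of_forall fun v hv => ?_
    obtain ⟨hv1, hv2⟩ := hv
    set t := dist v x with ht
    have hone : unifBall c r (ball x t) = 1 := by
      rw [unifBall_apply]
      have hsub2 : closedBall c r ⊆ ball x t := by
        intro u hu
        rw [mem_closedBall] at hu
        rw [mem_ball]
        have h1 : dist u x ≤ dist u c + dist c x := dist_triangle u c x
        rw [dist_comm c x] at h1
        linarith
      rw [Set.inter_eq_right.mpr hsub2]
      exact ENNReal.inv_mul_cancel (kappa_ne_zero c hr) (kappa_ne_top c)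
    have hlt1 : unifBall c' r (ball x t) < 1 := by
      rw [unifBall_apply]
      have htlt : t < dist x c' + r := by
        have h1 : t ≤ dist v c' + dist c' x := dist_triangle v c' x
        rw [dist_comm c' x] at h1
        linarith
      obtain ⟨w', hw'1, hw'2⟩ := aux_far hb hr (τ := t) htlt
      set O : Set Eu := {u : Eu | dist u c' < r ∧ t < dist u x} with hO
      have hOopen : IsOpen O := by
        apply IsOpen.inter
        · exact isOpen_lt (continuous_id.dist continuous_const) continuous_const
        · exact isOpen_lt continuous_const (continuous_id.dist continuous_const)
      have hOsub : O ⊆ closedBall c' r := fun u hu => ball_subset_closedBall hu.1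
      have hOpos : volume O ≠ 0 := (hOopen.measure_pos volume ⟨w', hw'1, hw'2⟩).ne'
      have hOfin : volume O ≠ ⊤ :=
        ((measure_mono hOsub).trans_lt (lt_top_iff_ne_top.mpr (kappa_ne_top c'))).ne
      have hsubdiff : ball x t ∩ closedBall c' r ⊆ closedBall c' r \ O := by
        rintro u ⟨hu1, hu2⟩
        refine ⟨hu2, ?_⟩
        rw [hO, Set.mem_setOf_eq]
        push_neg
        intro _
        exact le_of_lt (mem_ball.mp hu1)
      have hdiff : volume (closedBall c' r \ O)
          = volume (closedBall c' r) - volume O :=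
        measure_diff hOsub hOopen.measurableSet.nullMeasurableSet hOfin
      have hlt : volume (ball x t ∩ closedBall c' r) < volume (closedBall c' r) := by
        calc volume (ball x t ∩ closedBall c' r) ≤ volume (closedBall c' r \ O) :=
              measure_mono hsubdiff
          _ = volume (closedBall c' r) - volume O := hdiff
          _ < volume (closedBall c' r) :=
              ENNReal.sub_lt_self (kappa_ne_top c') (kappa_ne_zero c' hr) hOpos
      calc (volume (closedBall c' r))⁻¹ * volume (ball x t ∩ closedBall c' r)
          < (volume (closedBall c' r))⁻¹ * volume (closedBall c' r) := by
            exact (ENNReal.mul_lt_mul_iff_right (ENNReal.inv_ne_zero.mpr (kappa_ne_top c'))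
              (ENNReal.inv_ne_top.mpr (kappa_ne_zero c' hr))).mpr hlt
        _ = 1 := ENNReal.inv_mul_cancel (kappa_ne_zero c' hr) (kappa_ne_top c')
    calc unifBall c' r (ball x (dist v x)) < 1 := hlt1
      _ = unifBall c r (ball x (dist v x)) := hone.symm

theorem prob_bisector_equi_range_disks (c₁ c₂ : EuclideanSpace ℝ (Fin 2)) (r : ℝ)
    (hr : 0 < r) (hc : c₁ ≠ c₂) :
    (∀ x : EuclideanSpace ℝ (Fin 2), dist x c₁ = dist x c₂ →
      ((unifBall c₁ r).prod (unifBall c₂ r))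
        {uv : EuclideanSpace ℝ (Fin 2) × EuclideanSpace ℝ (Fin 2) |
          dist uv.1 x < dist uv.2 x} = 1 / 2) ∧
    (∀ x : EuclideanSpace ℝ (Fin 2), dist x c₁ < dist x c₂ →
      ((unifBall c₁ r).prod (unifBall c₂ r))
        {uv : EuclideanSpace ℝ (Fin 2) × EuclideanSpace ℝ (Fin 2) |
          dist uv.1 x < dist uv.2 x} > 1 / 2) ∧
    (∀ x : EuclideanSpace ℝ (Fin 2), dist x c₁ > dist x c₂ →
      ((unifBall c₁ r).prod (unifBall c₂ r))
        {uv : EuclideanSpace ℝ (Fin 2) × EuclideanSpace ℝ (Fin 2) |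
          dist uv.1 x < dist uv.2 x} < 1 / 2) := by
  refine ⟨fun x hx => P_eq_half c₁ c₂ x hr hx, fun x hx => P_gt_half c₁ c₂ x hr hx,
    fun x hx => ?_⟩
  haveI := unifBall_isProb c₁ hr
  haveI := unifBall_isProb c₂ hr
  have hswap := (Measure.measurePreserving_swap
    (μ := unifBall c₁ r) (ν := unifBall c₂ r)).measure_preimage
    (Aev_measurable x).nullMeasurableSet
  rw [Aev_swap] at hswap
  have hgt : 1/2 < ((unifBall c₂ r).prod (unifBall c₁ r)) (Aev x) :=
    P_gt_half c₂ c₁ x hr hx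
  rw [← hswap] at hgt
  have hpart := partition_one c₁ c₂ x hr
  by_contra hcon
  push_neg at hcon
  have : (1:ℝ≥0∞) < 1 := by
    calc (1:ℝ≥0∞) = 1/2 + 1/2 := by
          simp [one_div, ENNReal.inv_two_add_inv_two]
      _ < ((unifBall c₁ r).prod (unifBall c₂ r)) (Aev x)
          + ((unifBall c₁ r).prod (unifBall c₂ r))
            {uv : Eu × Eu | dist uv.2 x < dist uv.1 x} := by
        apply ENNReal.add_lt_add_of_le_of_lt (by norm_num) hcon hgt
      _ = 1 := hpart
  exact absurd this (lt_irrefl 1)
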